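/- Let n, m ≥ 1 and let B_1, ..., B_m be n×n real antisymmetric (skew-symmetric) matrices. Then Σ_{r,s=1}^m ‖[B_r, B_s]‖² ≤ (Σ_{r=1}^m ‖B_r‖²)². -/

import Mathlib

open Matrix BigOperators

/-- The squared Frobenius norm: sum of squares of the entries. -/
noncomputable def frobSq {n : ℕ} (A : Matrix (Fin n) (Fin n) ℝ) : ℝ :=
  ∑ i, ∑ j, (A i j) ^ 2

/-- The commutator of two matrices. -/
def mcomm {n : ℕ} (A B : Matrix (Fin n) (Fin n) ℝ) : Matrix (Fin n) (Fin n) ℝ :=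
  A * B - B * A

namespace DDVVaux

open Finset

variable {n : ℕ}

noncomputable def Fc (M : Matrix (Fin n) (Fin n) ℂ) : ℝ := ∑ a, ∑ b, Complex.normSq (M a b)

lemma Fc_eq_trace (M : Matrix (Fin n) (Fin n) ℂ) : Fc M = (Matrix.trace (M * Mᴴ)).re := by
  simp only [Matrix.trace, Matrix.diag, Matrix.mul_apply, Matrix.conjTranspose_apply]
  rw [Complex.re_sum]
  refine Finset.sum_congr rfl fun a _ => ?_
  rw [Complex.re_sum]
  refine Finset.sum_congr rfl fun b _ => ?_
  rw [show star (M a b) = (starRingEnd ℂ) (M a b) from rfl, Complex.mul_conj]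
  simp

lemma Fc_mul_right (M V : Matrix (Fin n) (Fin n) ℂ) (hV : V * Vᴴ = 1) : Fc (M * V) = Fc M := by
  rw [Fc_eq_trace, Fc_eq_trace, Matrix.conjTranspose_mul, Matrix.mul_assoc,
    ← Matrix.mul_assoc V, hV, Matrix.one_mul]

lemma Fc_mul_left (M W : Matrix (Fin n) (Fin n) ℂ) (hW : Wᴴ * W = 1) : Fc (W * M) = Fc M := by
  rw [Fc_eq_trace, Fc_eq_trace, Matrix.conjTranspose_mul, Matrix.trace_mul_comm,
    Matrix.mul_assoc, ← Matrix.mul_assoc Wᴴ, hW, Matrix.one_mul, Matrix.trace_mul_comm]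

lemma Fc_smul_I (M : Matrix (Fin n) (Fin n) ℂ) : Fc (Complex.I • M) = Fc M := by
  unfold Fc
  refine Finset.sum_congr rfl fun a _ => Finset.sum_congr rfl fun b _ => ?_
  simp [Complex.normSq_mul]

lemma Fc_diag (d : Fin n → ℝ) :
    Fc (Matrix.diagonal (fun c => (d c : ℂ))) = ∑ c, d c ^ 2 := by
  unfold Fc
  refine Finset.sum_congr rfl fun a _ => ?_
  rw [Finset.sum_eq_single a]
  · rw [Matrix.diagonal_apply_eq]
    rw [Complex.normSq_ofReal]; ring
  · intro b _ hb
    rw [Matrix.diagonal_apply_ne' _ hb]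
    simp
  · intro h; exact absurd (Finset.mem_univ a) h

lemma rank_eq_of_unitary_conj (U M₁ M₂ : Matrix (Fin n) (Fin n) ℂ)
    (hU1 : U * Uᴴ = 1) (hU2 : Uᴴ * U = 1) (h : U * M₁ = M₂ * U) :
    M₁.rank = M₂.rank := by
  have h1 : M₁ = Uᴴ * (M₂ * U) := by
    rw [← h, ← Matrix.mul_assoc, hU2, Matrix.one_mul]
  have h2 : M₂ = U * M₁ * Uᴴ := by
    rw [h, Matrix.mul_assoc, hU1, Matrix.mul_one]
  apply le_antisymm
  · calc M₁.rank = (Uᴴ * (M₂ * U)).rank := by rw [← h1]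
    _ ≤ (M₂ * U).rank := Matrix.rank_mul_le_right _ _
    _ ≤ M₂.rank := Matrix.rank_mul_le_left _ _
  · calc M₂.rank = (U * M₁ * Uᴴ).rank := by rw [← h2]
    _ ≤ (U * M₁).rank := Matrix.rank_mul_le_left _ _
    _ ≤ M₁.rank := Matrix.rank_mul_le_right _ _

lemma mult_sym (d : Fin n → ℝ) (U : Matrix (Fin n) (Fin n) ℂ)
    (hU1 : U * Uᴴ = 1) (hU2 : Uᴴ * U = 1)
    (hUD : U * Matrix.diagonal (fun c => (d c : ℂ)) = -(Matrix.diagonal (fun c => (d c : ℂ)) * U))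
    (μ : ℝ) :
    (Finset.univ.filter (fun c => d c = μ)).card
      = (Finset.univ.filter (fun c => d c = -μ)).card := by
  classical
  set w₁ : Fin n → ℂ := fun c => (d c : ℂ) - (μ : ℂ) with hw₁
  set w₂ : Fin n → ℂ := fun c => -((d c : ℂ) + (μ : ℂ)) with hw₂
  have hcomm : U * Matrix.diagonal w₁ = Matrix.diagonal w₂ * U := by
    ext a b
    have hab := congrFun (congrFun hUD a) b
    simp only [Matrix.mul_diagonal, Matrix.diagonal_mul, Matrix.neg_apply] at hab ⊢
    rw [hw₁, hw₂]
    linear_combination hab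
  have hrank : (Matrix.diagonal w₁).rank = (Matrix.diagonal w₂).rank :=
    rank_eq_of_unitary_conj U _ _ hU1 hU2 hcomm
  rw [Matrix.rank_diagonal, Matrix.rank_diagonal] at hrank
  have e1 : Fintype.card {i // w₁ i ≠ 0} = (Finset.univ.filter (fun c => ¬ (d c = μ))).card := by
    rw [Fintype.card_subtype]
    congr 1
    apply Finset.filter_congr
    intro c _
    simp [hw₁, sub_ne_zero, Complex.ofReal_inj]
  have e2 : Fintype.card {i // w₂ i ≠ 0} = (Finset.univ.filter (fun c => ¬ (d c = -μ))).card := by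
    rw [Fintype.card_subtype]
    congr 1
    apply Finset.filter_congr
    intro c _
    rw [hw₂]
    simp only [ne_eq, neg_eq_zero]
    constructor
    · intro h h2; apply h; rw [h2]; push_cast; ring
    · intro h h2; apply h
      have := congrArg Complex.re h2
      simp at this
      linarith
  have hsplit1 := Finset.card_filter_add_card_filter_not
    (s := (Finset.univ : Finset (Fin n))) (p := fun c => d c = μ)
  have hsplit2 := Finset.card_filter_add_card_filter_not
    (s := (Finset.univ : Finset (Fin n))) (p := fun c => d c = -μ)
  omega

lemma eig_pointwise (d : Fin n → ℝ)
    (hsym : ∀ μ : ℝ, (Finset.univ.filter (fun c => d c = μ)).card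
      = (Finset.univ.filter (fun c => d c = -μ)).card)
    (a b : Fin n) (hab : a ≠ b) :
    (d a + d b) ^ 2 ≤ ∑ c, (d c) ^ 2 := by
  classical
  set m : ℝ → ℕ := fun μ => (Finset.univ.filter (fun c => d c = μ)).card with hm
  set T : ℝ → Finset (Fin n) := fun ν => Finset.univ.filter (fun c => d c = ν ∨ d c = -ν)
    with hT
  have hTsum : ∀ ν : ℝ, ν ≠ 0 → ∑ c ∈ T ν, (d c)^2 = (2 * (m ν) : ℝ) * ν ^ 2 := by
    intro ν hν
    have hsplit : T ν = (Finset.univ.filter (fun c => d c = ν))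
        ∪ (Finset.univ.filter (fun c => d c = -ν)) := by
      simp only [hT]
      exact Finset.filter_or _ _ _
    have hdisj : Disjoint (Finset.univ.filter (fun c => d c = ν))
        (Finset.univ.filter (fun c => d c = -ν)) := by
      rw [Finset.disjoint_filter]
      intro c _ h1 h2
      rw [h1] at h2
      exact hν (by linarith)
    have e1 : ∑ c ∈ (Finset.univ.filter (fun c => d c = ν)), (d c)^2 = (m ν : ℝ) * ν^2 := by
      rw [Finset.sum_congr rfl (fun c hc => by rw [(Finset.mem_filter.mp hc).2] :
        ∀ c ∈ (Finset.univ.filter (fun c => d c = ν)), (d c)^2 = ν^2),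
        Finset.sum_const, nsmul_eq_mul]
    have e2 : ∑ c ∈ (Finset.univ.filter (fun c => d c = -ν)), (d c)^2 = (m (-ν) : ℝ) * ν^2 := by
      rw [Finset.sum_congr rfl (fun c hc => by rw [(Finset.mem_filter.mp hc).2]; ring :
        ∀ c ∈ (Finset.univ.filter (fun c => d c = -ν)), (d c)^2 = ν^2),
        Finset.sum_const, nsmul_eq_mul]
    have hms : m (-ν) = m ν := (hsym ν).symm
    rw [hsplit, Finset.sum_union hdisj, e1, e2, hms]
    ring
  have hTle : ∀ ν : ℝ, ∑ c ∈ T ν, (d c)^2 ≤ ∑ c, (d c)^2 :=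
    fun ν => Finset.sum_le_sum_of_subset_of_nonneg (Finset.subset_univ _)
      (fun c _ _ => sq_nonneg _)
  by_cases hsum0 : d a + d b = 0
  · rw [hsum0]
    simpa using Finset.sum_nonneg (fun c (_ : c ∈ Finset.univ) => sq_nonneg (d c))
  by_cases heq : d a = d b
  · have hla : d a ≠ 0 := by
      intro h
      apply hsum0
      rw [heq] at h
      rw [heq, h]; ring
    have hm2 : 2 ≤ m (d a) := by
      have : ({a, b} : Finset (Fin n)) ⊆ Finset.univ.filter (fun c => d c = d a) := by
        intro c hc
        simp only [Finset.mem_insert, Finset.mem_singleton] at hc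
        rcases hc with rfl | rfl
        · simp
        · simp [heq]
      calc 2 = ({a, b} : Finset (Fin n)).card := by
            rw [Finset.card_insert_of_notMem (by simpa using hab), Finset.card_singleton]
      _ ≤ _ := Finset.card_le_card this
    calc (d a + d b)^2 = (2 * 2 : ℝ) * (d a)^2 := by rw [← heq]; ring
    _ ≤ (2 * (m (d a)) : ℝ) * (d a)^2 := by
        apply mul_le_mul_of_nonneg_right _ (sq_nonneg _)
        have : (2:ℝ) ≤ (m (d a) : ℝ) := by exact_mod_cast hm2
        linarith
    _ = ∑ c ∈ T (d a), (d c)^2 := (hTsum _ hla).symm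
    _ ≤ _ := hTle _
  · have hwit : ∀ ν : ℝ, (∃ c, d c = ν) → ν ≠ 0 → (2:ℝ) * ν^2 ≤ ∑ c ∈ T ν, (d c)^2 := by
      intro ν ⟨c, hc⟩ hν
      rw [hTsum ν hν]
      have h1 : 1 ≤ m ν := by
        rw [hm]
        refine Finset.card_pos.mpr ⟨c, ?_⟩
        simp [hc]
      have : (1:ℝ) ≤ (m ν : ℝ) := by exact_mod_cast h1
      nlinarith [sq_nonneg ν]
    by_cases ha0 : d a = 0
    · have hb0 : d b ≠ 0 := fun h => hsum0 (by rw [ha0, h]; ring)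
      calc (d a + d b)^2 = (d b)^2 := by rw [ha0]; ring
      _ ≤ 2 * (d b)^2 := by nlinarith [sq_nonneg (d b)]
      _ ≤ ∑ c ∈ T (d b), (d c)^2 := hwit _ ⟨b, rfl⟩ hb0
      _ ≤ _ := hTle _
    by_cases hb0 : d b = 0
    · have ha0' : d a ≠ 0 := ha0
      calc (d a + d b)^2 = (d a)^2 := by rw [hb0]; ring
      _ ≤ 2 * (d a)^2 := by nlinarith [sq_nonneg (d a)]
      _ ≤ ∑ c ∈ T (d a), (d c)^2 := hwit _ ⟨a, rfl⟩ ha0'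
      _ ≤ _ := hTle _
    · have hne : d a ≠ - d b := fun h => hsum0 (by rw [h]; ring)
      have hdisj : Disjoint (T (d a)) (T (d b)) := by
        simp only [hT]
        rw [Finset.disjoint_filter]
        intro c _ h1 h2
        rcases h1 with h1 | h1 <;> rcases h2 with h2 | h2
        · exact heq (by linarith)
        · exact hne (by linarith)
        · exact hne (by linarith)
        · exact heq (by linarith)
      have hu : ∑ c ∈ T (d a) ∪ T (d b), (d c)^2 ≤ ∑ c, (d c)^2 :=
        Finset.sum_le_sum_of_subset_of_nonneg (Finset.subset_univ _) (fun c _ _ => sq_nonneg _)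
      rw [Finset.sum_union hdisj] at hu
      have h1 := hwit _ ⟨a, rfl⟩ ha0
      have h2 := hwit _ ⟨b, rfl⟩ hb0
      nlinarith [sq_nonneg (d a - d b)]

lemma diag_sum_le (d : Fin n → ℝ)
    (hsym : ∀ μ : ℝ, (Finset.univ.filter (fun c => d c = μ)).card
      = (Finset.univ.filter (fun c => d c = -μ)).card)
    (B : Matrix (Fin n) (Fin n) ℂ) (hB : Bᵀ = -B) :
    ∑ a, ∑ b, (d a + d b)^2 * Complex.normSq (B a b)
      ≤ (∑ c, (d c)^2) * ∑ a, ∑ b, Complex.normSq (B a b) := by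
  rw [Finset.mul_sum]
  refine Finset.sum_le_sum fun a _ => ?_
  rw [Finset.mul_sum]
  refine Finset.sum_le_sum fun b _ => ?_
  by_cases hab : a = b
  · subst hab
    have h0 : B a a = 0 := by
      have := congrFun (congrFun hB a) a
      simp only [Matrix.transpose_apply, Matrix.neg_apply] at this
      linear_combination (this : B a a = - B a a) / 2
    rw [h0]
    simp
  · exact mul_le_mul_of_nonneg_right (eig_pointwise d hsym a b hab) (Complex.normSq_nonneg _)


/-- conjugate of a complex matrix entrywise -/
def cm (M : Matrix (Fin n) (Fin n) ℂ) : Matrix (Fin n) (Fin n) ℂ := M.map (starRingEnd ℂ)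

lemma cm_mul (M N : Matrix (Fin n) (Fin n) ℂ) : cm (M * N) = cm M * cm N :=
  _root_.Matrix.map_mul

lemma cm_transpose (M : Matrix (Fin n) (Fin n) ℂ) : (cm M)ᵀ = Mᴴ := rfl

lemma cm_conjTranspose (M : Matrix (Fin n) (Fin n) ℂ) : cm (Mᴴ) = Mᵀ := by
  ext a b
  simp [cm, Matrix.conjTranspose_apply]

lemma transpose_eq_cm_conjTranspose (M : Matrix (Fin n) (Fin n) ℂ) : (cm M)ᴴ = Mᵀ := by
  ext a b
  simp [cm, Matrix.conjTranspose_apply]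

lemma ct_t (M : Matrix (Fin n) (Fin n) ℂ) : (Mᴴ)ᵀ = cm M := by
  ext a b
  simp [cm, Matrix.conjTranspose_apply]

lemma cm_one : cm (1 : Matrix (Fin n) (Fin n) ℂ) = 1 := by
  ext a b
  by_cases h : a = b <;> simp [cm, Matrix.one_apply, h]

/-- The key single-pair inequality: for real antisymmetric `X A`,
`‖[X,A]‖² ≤ ‖X‖² ‖A‖²`. -/
lemma comm_frobSq_le (X A : Matrix (Fin n) (Fin n) ℝ)
    (hX : Xᵀ = -X) (hA : Aᵀ = -A) :
    frobSq (X * A - A * X) ≤ frobSq X * frobSq A := by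
  classical
  set φ : Matrix (Fin n) (Fin n) ℝ →+* Matrix (Fin n) (Fin n) ℂ :=
    Complex.ofRealHom.mapMatrix with hφ
  set X' : Matrix (Fin n) (Fin n) ℂ := φ X with hX'def
  set A' : Matrix (Fin n) (Fin n) ℂ := φ A with hA'def
  have hmapT : ∀ (M : Matrix (Fin n) (Fin n) ℝ), Mᵀ = -M → (φ M)ᵀ = -(φ M) := by
    intro M hM
    ext a b
    have := congrFun (congrFun hM a) b
    simp only [Matrix.transpose_apply, Matrix.neg_apply] at this ⊢
    simp only [hφ, RingHom.mapMatrix_apply, Matrix.map_apply, this]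
    exact map_neg Complex.ofRealHom _
  have hcmφ : ∀ (M : Matrix (Fin n) (Fin n) ℝ), cm (φ M) = φ M := by
    intro M
    ext a b
    simp [cm, hφ, Matrix.map_apply, Complex.conj_ofReal]
  have hX'T : X'ᵀ = -X' := hmapT X hX
  have hA'T : A'ᵀ = -A' := hmapT A hA
  set H : Matrix (Fin n) (Fin n) ℂ := Complex.I • X' with hHdef
  have hcX' : cm X' = X' := by rw [hX'def]; exact hcmφ X
  have hcA' : cm A' = A' := by rw [hA'def]; exact hcmφ A
  have hX'H : X'ᴴ = -X' := by
    rw [← cm_transpose, hcX', hX'T]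
  have hH : H.IsHermitian := by
    unfold Matrix.IsHermitian
    rw [hHdef, Matrix.conjTranspose_smul, hX'H]
    simp [Complex.star_def, Complex.conj_I]
  set V : Matrix (Fin n) (Fin n) ℂ := (hH.eigenvectorUnitary : Matrix (Fin n) (Fin n) ℂ)
    with hVdef
  set d : Fin n → ℝ := hH.eigenvalues with hddef
  set D : Matrix (Fin n) (Fin n) ℂ := Matrix.diagonal (fun c => (d c : ℂ)) with hDdef
  have hspec : H = V * D * Vᴴ := by
    have := hH.spectral_theorem
    rw [Unitary.conjStarAlgAut_apply] at this
    rw [hDdef]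
    exact this
  have hV1 : V * Vᴴ = 1 := by
    have := (Matrix.mem_unitaryGroup_iff).mp hH.eigenvectorUnitary.2
    simpa [Matrix.star_eq_conjTranspose] using this
  have hV2 : Vᴴ * V = 1 := by
    have := (Matrix.mem_unitaryGroup_iff').mp hH.eigenvectorUnitary.2
    simpa [Matrix.star_eq_conjTranspose] using this
  -- basic identities
  have hHV : H * V = V * D := by
    rw [hspec, Matrix.mul_assoc, Matrix.mul_assoc, hV2, Matrix.mul_one]
  have hVH : Vᴴ * H = D * Vᴴ := by
    rw [hspec, ← Matrix.mul_assoc, ← Matrix.mul_assoc, hV2, Matrix.one_mul]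
  have hDc : cm D = D := by
    ext a b
    by_cases h : a = b
    · subst h; simp [cm, hDdef, Matrix.map_apply, Complex.conj_ofReal]
    · simp [cm, hDdef, Matrix.map_apply, Matrix.diagonal_apply_ne _ h]
  have hcmH : cm H = -H := by
    ext a b
    have h2 : (starRingEnd ℂ) (X' a b) = X' a b := by
      have := congrFun (congrFun hcX' a) b
      simpa [cm, Matrix.map_apply] using this
    show (starRingEnd ℂ) (H a b) = -(H a b)
    rw [hHdef]
    show (starRingEnd ℂ) (Complex.I • X' a b) = -(Complex.I • X' a b)
    simp only [smul_eq_mul]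
    rw [_root_.map_mul (starRingEnd ℂ), Complex.conj_I, h2]
    ring
  -- conjugated spectral relation:  -H = cm V * D * Vᵀ
  have hspec2 : -H = cm V * D * Vᵀ := by
    rw [← hcmH, hspec, cm_mul, cm_mul, hDc, cm_conjTranspose]
  have hVT1 : Vᵀ * cm V = 1 := by
    rw [← cm_conjTranspose V, ← cm_mul, hV2, cm_one]
  have hcmV1 : cm V * Vᵀ = 1 := by
    rw [← cm_conjTranspose V, ← cm_mul, hV1, cm_one]
  have hcmVD : cm V * D = -(H * cm V) := by
    have : (-H) * cm V = cm V * D * (Vᵀ * cm V) := by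
      rw [hspec2, Matrix.mul_assoc, Matrix.mul_assoc]
    rw [hVT1, Matrix.mul_one] at this
    rw [← this, Matrix.neg_mul]
  set U : Matrix (Fin n) (Fin n) ℂ := Vᴴ * cm V with hUdef
  set B : Matrix (Fin n) (Fin n) ℂ := Vᴴ * A' * cm V with hBdef
  set C : Matrix (Fin n) (Fin n) ℂ := Vᴴ * A' * V with hCdef
  have hUH : Uᴴ = Vᵀ * V := by
    rw [hUdef, Matrix.conjTranspose_mul, transpose_eq_cm_conjTranspose,
      Matrix.conjTranspose_conjTranspose]
  have hU1 : U * Uᴴ = 1 := by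
    rw [hUdef, hUH, Matrix.mul_assoc, ← Matrix.mul_assoc (cm V), hcmV1, Matrix.one_mul, hV2]
  have hU2 : Uᴴ * U = 1 := by
    rw [hUdef, hUH, Matrix.mul_assoc, ← Matrix.mul_assoc V, hV1, Matrix.one_mul, hVT1]
  have hUD : U * D = -(D * U) := by
    rw [hUdef, Matrix.mul_assoc, hcmVD]
    rw [show Vᴴ * -(H * cm V) = -(Vᴴ * H * cm V) from by
      rw [Matrix.mul_neg, Matrix.mul_assoc]]
    rw [hVH, Matrix.mul_assoc]
  have hBskew : Bᵀ = -B := by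
    rw [hBdef, Matrix.transpose_mul, Matrix.transpose_mul, cm_transpose, ct_t, hA'T,
      Matrix.neg_mul, Matrix.mul_neg, ← Matrix.mul_assoc]
  have hsym : ∀ μ : ℝ, (Finset.univ.filter (fun c => d c = μ)).card
      = (Finset.univ.filter (fun c => d c = -μ)).card := by
    apply mult_sym d U hU1 hU2
    rw [← hDdef]; exact hUD
  have e1 : Vᴴ * (H * A') * V = D * (Vᴴ * A' * V) := by
    simp only [← Matrix.mul_assoc]
    rw [hVH]
  have e2 : Vᴴ * (A' * H) * V = (Vᴴ * A' * V) * D := by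
    simp only [← Matrix.mul_assoc]
    rw [Matrix.mul_assoc _ H V, hHV, ← Matrix.mul_assoc]
  have hsub : Vᴴ * (H * A' - A' * H) * V = D * C - C * D := by
    rw [hCdef, Matrix.mul_sub, Matrix.sub_mul, e1, e2]
  have hCBU : D * C - C * D = (D * B + B * D) * Uᴴ := by
    rw [hCdef, hBdef, hUH, Matrix.add_mul]
    have f1 : D * (Vᴴ * A' * cm V) * (Vᵀ * V) = D * (Vᴴ * A' * V) := by
      simp only [← Matrix.mul_assoc]
      rw [Matrix.mul_assoc _ (cm V) Vᵀ, hcmV1, Matrix.mul_one]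
    have f0 : Vᴴ * A' * H * cm V * Vᵀ * V = Vᴴ * A' * V * D := by
      rw [Matrix.mul_assoc (Vᴴ * A' * H) (cm V) Vᵀ, hcmV1, Matrix.mul_one,
        Matrix.mul_assoc (Vᴴ * A') H V, hHV, ← Matrix.mul_assoc]
    have f2 : (Vᴴ * A' * cm V) * D * (Vᵀ * V) = -((Vᴴ * A' * V) * D) := by
      rw [Matrix.mul_assoc (Vᴴ * A') (cm V) D, hcmVD, Matrix.mul_neg, Matrix.neg_mul,
        ← Matrix.mul_assoc, ← Matrix.mul_assoc, f0]
    rw [f1, f2, sub_eq_add_neg]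
  have hVHH1 : (Vᴴ)ᴴ * Vᴴ = 1 := by rw [Matrix.conjTranspose_conjTranspose, hV1]
  have hUHH1 : Uᴴ * (Uᴴ)ᴴ = 1 := by rw [Matrix.conjTranspose_conjTranspose, hU2]
  have hcmVU1 : cm V * (cm V)ᴴ = 1 := by rw [transpose_eq_cm_conjTranspose, hcmV1]
  have frob_chain : frobSq (X * A - A * X) = Fc (D * B + B * D) := by
    calc frobSq (X * A - A * X) = Fc (φ (X * A - A * X)) := by
          unfold frobSq Fc
          refine Finset.sum_congr rfl fun a _ => Finset.sum_congr rfl fun b _ => ?_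
          rw [show φ (X * A - A * X) a b = ((X * A - A * X) a b : ℂ) from rfl,
            Complex.normSq_ofReal]
          ring
    _ = Fc (X' * A' - A' * X') := by rw [map_sub φ, _root_.map_mul φ, _root_.map_mul φ, ← hX'def, ← hA'def]
    _ = Fc (H * A' - A' * H) := by
          rw [← Fc_smul_I (X' * A' - A' * X')]
          rw [show Complex.I • (X' * A' - A' * X') = H * A' - A' * H from by
            rw [hHdef, smul_sub, smul_mul_assoc, mul_smul_comm]]
    _ = Fc ((H * A' - A' * H) * V) := (Fc_mul_right _ V hV1).symm
    _ = Fc (Vᴴ * ((H * A' - A' * H) * V)) := (Fc_mul_left _ (Vᴴ) hVHH1).symm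
    _ = Fc (D * C - C * D) := by rw [← Matrix.mul_assoc, hsub]
    _ = Fc ((D * B + B * D) * Uᴴ) := by rw [hCBU]
    _ = Fc (D * B + B * D) := Fc_mul_right _ (Uᴴ) hUHH1
  have hentry : Fc (D * B + B * D) = ∑ a, ∑ b, (d a + d b)^2 * Complex.normSq (B a b) := by
    unfold Fc
    refine Finset.sum_congr rfl fun a _ => Finset.sum_congr rfl fun b _ => ?_
    rw [Matrix.add_apply, hDdef, Matrix.diagonal_mul, Matrix.mul_diagonal]
    rw [show (d a : ℂ) * B a b + B a b * (d b : ℂ) = (((d a + d b : ℝ)) : ℂ) * B a b by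
      push_cast; ring]
    rw [Complex.normSq_mul, Complex.normSq_ofReal]
    ring
  have hFcX : ∑ c, (d c) ^ 2 = frobSq X := by
    have hD_eq : D = Vᴴ * (H * V) := by
      rw [← Matrix.mul_assoc, hVH, Matrix.mul_assoc, hV2, Matrix.mul_one]
    calc ∑ c, (d c) ^ 2 = Fc D := by rw [hDdef, Fc_diag]
    _ = Fc (Vᴴ * (H * V)) := by rw [← hD_eq]
    _ = Fc (H * V) := Fc_mul_left _ (Vᴴ) hVHH1
    _ = Fc H := Fc_mul_right _ V hV1
    _ = Fc X' := by rw [hHdef, Fc_smul_I]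
    _ = frobSq X := by
          unfold frobSq Fc
          refine Finset.sum_congr rfl fun a _ => Finset.sum_congr rfl fun b _ => ?_
          rw [show X' a b = ((X a b : ℝ) : ℂ) from rfl, Complex.normSq_ofReal]
          ring
  have hFcA : (∑ a, ∑ b, Complex.normSq (B a b)) = frobSq A := by
    calc (∑ a, ∑ b, Complex.normSq (B a b)) = Fc B := rfl
    _ = Fc (Vᴴ * (A' * cm V)) := by rw [hBdef, Matrix.mul_assoc]
    _ = Fc (A' * cm V) := Fc_mul_left _ (Vᴴ) hVHH1
    _ = Fc A' := Fc_mul_right _ (cm V) hcmVU1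
    _ = frobSq A := by
          unfold frobSq Fc
          refine Finset.sum_congr rfl fun a _ => Finset.sum_congr rfl fun b _ => ?_
          rw [show A' a b = ((A a b : ℝ) : ℂ) from rfl, Complex.normSq_ofReal]
          ring
  calc frobSq (X * A - A * X) = ∑ a, ∑ b, (d a + d b)^2 * Complex.normSq (B a b) := by
        rw [frob_chain, hentry]
  _ ≤ (∑ c, (d c)^2) * ∑ a, ∑ b, Complex.normSq (B a b) := diag_sum_le d hsym B hBskew
  _ = frobSq X * frobSq A := by rw [hFcX, hFcA]

end DDVVaux

open DDVVaux in
/-- The DDVV inequality also holds for antisymmetric (skew-symmetric) matrices: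
for real antisymmetric matrices `B₁, …, B_m`,
`∑_{r,s} ‖[B_r, B_s]‖² ≤ (∑_r ‖B_r‖²)²`. -/
theorem ddvv_inequality_antisymmetric (n m : ℕ) (hn : 1 ≤ n) (hm : 1 ≤ m)
    (B : Fin m → Matrix (Fin n) (Fin n) ℝ) (hskew : ∀ r, (B r)ᵀ = -(B r)) :
    ∑ r, ∑ s, frobSq (mcomm (B r) (B s)) ≤ (∑ r, frobSq (B r)) ^ 2 := by
  have step1 : ∑ r, ∑ s, frobSq (mcomm (B r) (B s))
      ≤ ∑ r, ∑ s, frobSq (B r) * frobSq (B s) := by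
    refine Finset.sum_le_sum fun r _ => Finset.sum_le_sum fun s _ => ?_
    exact comm_frobSq_le (B r) (B s) (hskew r) (hskew s)
  refine le_trans step1 (le_of_eq ?_)
  rw [sq, Finset.sum_mul_sum]
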